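/- Let U and V be separable real Hilbert spaces and let T : U × V → ℝ be bounded below by T_inf and, for each fixed u ∈ U, differentiable in its second argument with ‖∇_v T(u, v) − ∇_v T(u, v')‖ ≤ L₂‖v − v'‖ for all v, v' (L₂ > 0 uniform in u). Let (Ω, 𝓕, μ) be a probability space, let u₀ ∈ U and v₀ ∈ V be deterministic, and let (u_t)_{t=0}^{T}, (v_t)_{t=0}^{T}, (ĝ_t)_{t=0}^{T−1} be random processes with v_{t+1} = v_t − η₂ ĝ_t, where 0 < η₂ ≤ 1/L₂. Assume for each t there is a sub-σ-algebra 𝓖_t ⊆ 𝓕 such that u_{t+1} and v_t are strongly 𝓖_t-measurable, μ[ĝ_t | 𝓖_t] = ∇_v T(u_{t+1}, v_t) a.e., μ[‖ĝ_t − ∇_v T(u_{t+1}, v_t)‖² | 𝓖_t] ≤ σ₂² a.e., and all quantities T(u_t, v_t), T(u_{t+1}, v_t), ‖∇_v T(u_{t+1}, v_t)‖², ‖ĝ_t‖² are integrable. Define Γ_T := Σ_{t=0}^{T−1} E[|T(u_{t+1}, v_t) − T(u_t, v_t)|]. Then (1/T) Σ_{t=0}^{T−1} E[‖∇_v T(u_{t+1},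 v_t)‖²] ≤ 2(T(u₀, v₀) − T_inf + Γ_T)/(η₂ T) + L₂ η₂ σ₂². -/

import Mathlib

open MeasureTheory


lemma descent_lemma {V : Type*} [NormedAddCommGroup V] [InnerProductSpace ℝ V]
    [CompleteSpace V] (f : V → ℝ) (L : ℝ) (hL : 0 ≤ L) (hd : Differentiable ℝ f)
    (hlip : ∀ a b : V, ‖gradient f a - gradient f b‖ ≤ L * ‖a - b‖) (x d : V) :
    f (x + d) ≤ f x + inner ℝ (gradient f x) d + L / 2 * ‖d‖ ^ 2 := by
  set φ : ℝ → ℝ := fun t => inner ℝ (gradient f (x + t • d)) d with hφ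
  have hg : ∀ t : ℝ, HasDerivAt (fun s : ℝ => f (x + s • d)) (φ t) t := by
    intro t
    have hc : HasDerivAt (fun s : ℝ => x + s • d) d t := by
      simpa using ((hasDerivAt_id t).smul_const d).const_add x
    have h1 := ((hd (x + t • d)).hasGradientAt.hasFDerivAt.comp_hasDerivAt t hc)
    rw [show φ t = (fderiv ℝ f (x + t • d)) d by simp [hφ, gradient, InnerProductSpace.toDual_symm_apply]]
    exact (hd (x + t • d)).hasFDerivAt.comp_hasDerivAt t hc
  have hφlip : LipschitzWith (Real.toNNReal (L * ‖d‖ ^ 2)) φ := by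
    intro s t
    rw [edist_dist, edist_dist, ← ENNReal.ofReal_coe_nnreal, Real.coe_toNNReal _ (by positivity),
      ← ENNReal.ofReal_mul (by positivity)]
    refine ENNReal.ofReal_le_ofReal ?_
    rw [Real.dist_eq, Real.dist_eq]
    have : φ s - φ t = inner ℝ (gradient f (x + s • d) - gradient f (x + t • d)) d := by
      simp [hφ, inner_sub_left]
    rw [this]
    calc |inner ℝ (gradient f (x + s • d) - gradient f (x + t • d)) d|
        ≤ ‖gradient f (x + s • d) - gradient f (x + t • d)‖ * ‖d‖ := abs_real_inner_le_norm _ _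
      _ ≤ (L * ‖(x + s • d) - (x + t • d)‖) * ‖d‖ := by
          gcongr; exact hlip _ _
      _ = L * ‖d‖ ^ 2 * |s - t| := by
          have : (x + s • d) - (x + t • d) = (s - t) • d := by
            rw [sub_smul]; abel
          rw [this, norm_smul]
          simp [Real.norm_eq_abs]; ring
  have hφcont : Continuous φ := hφlip.continuous
  have hFTC : ∫ t in (0:ℝ)..1, φ t = f (x + d) - f x := by
    have := intervalIntegral.integral_eq_sub_of_hasDerivAt (f := fun s : ℝ => f (x + s • d))
      (f' := φ) (a := 0) (b := 1) (fun t _ => hg t)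
      (hφcont.intervalIntegrable 0 1)
    simpa using this
  have hbound : ∀ t ∈ Set.Icc (0:ℝ) 1, φ t ≤ φ 0 + L * ‖d‖ ^ 2 * t := by
    intro t ht
    have h1 : φ t - φ 0 ≤ |φ t - φ 0| := le_abs_self _
    have h2 : |φ t - φ 0| ≤ L * ‖d‖ ^ 2 * |t - 0| := by
      have := hφlip.dist_le_mul t 0
      rw [Real.dist_eq, Real.dist_eq, Real.coe_toNNReal _ (by positivity)] at this
      exact this
    rw [sub_zero, abs_of_nonneg ht.1] at h2
    linarith
  have hI : ∫ t in (0:ℝ)..1, φ t ≤ ∫ t in (0:ℝ)..1, (φ 0 + L * ‖d‖ ^ 2 * t) := by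
    refine intervalIntegral.integral_mono_on (by norm_num) (hφcont.intervalIntegrable 0 1)
      ((continuous_const.add (continuous_const.mul continuous_id)).intervalIntegrable 0 1) ?_
    intro t ht; exact hbound t ht
  have hRHS : ∫ t in (0:ℝ)..1, (φ 0 + L * ‖d‖ ^ 2 * t) = φ 0 + L * ‖d‖ ^ 2 / 2 := by
    have h1 : IntervalIntegrable (fun t : ℝ => L * ‖d‖ ^ 2 * t) volume 0 1 :=
      (continuous_const.mul continuous_id).intervalIntegrable 0 1
    rw [intervalIntegral.integral_add intervalIntegrable_const h1,
      intervalIntegral.integral_const_mul, integral_id]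
    simp
    ring
  have hφ0 : φ 0 = inner ℝ (gradient f x) d := by simp [hφ]
  nlinarith [hFTC, hI, hRHS, hφ0]


lemma condExpL2_ae_eq_condexp' {Ω V : Type*} [NormedAddCommGroup V] [InnerProductSpace ℝ V]
    [CompleteSpace V] {m m0 : MeasurableSpace Ω} (hm : m ≤ m0)
    {μ : @Measure Ω m0} [IsProbabilityMeasure μ] (G : Lp V 2 μ) :
    (condExpL2 V ℝ hm G : Ω → V) =ᵐ[μ] μ[(G : Ω → V)|m] := by
  refine ae_eq_condExp_of_forall_setIntegral_eq hm
    (MemLp.integrable one_le_two (Lp.memLp G)) (fun s _ hμs => ?_) (fun s hs hμs => ?_) ?_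
  · exact (MemLp.integrable one_le_two (Lp.memLp
      ((condExpL2 V ℝ hm G : Lp V 2 μ)))).integrableOn
  · exact integral_condExpL2_eq hm G hs hμs.ne
  · have := lpMeas.aestronglyMeasurable (𝕜 := ℝ) (condExpL2 V ℝ hm G)
    exact this

lemma integral_inner_condexp_eq {Ω V : Type*} [NormedAddCommGroup V] [InnerProductSpace ℝ V]
    [CompleteSpace V] {m m0 : MeasurableSpace Ω} (hm : m ≤ m0)
    {μ : @Measure Ω m0} [IsProbabilityMeasure μ] {F G : Ω → V}
    (hF2 : MemLp F 2 μ) (hG2 : MemLp G 2 μ)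
    (hFG : F =ᵐ[μ] μ[G|m]) :
    ∫ ω, (inner ℝ (F ω) (G ω) : ℝ) ∂μ = ∫ ω, ‖F ω‖ ^ 2 ∂μ := by
  set Fl := hF2.toLp F
  set Gl := hG2.toLp G
  have hFl : (Fl : Ω → V) =ᵐ[μ] F := hF2.coeFn_toLp
  have hGl : (Gl : Ω → V) =ᵐ[μ] G := hG2.coeFn_toLp
  have hFm : AEStronglyMeasurable[m] (Fl : Ω → V) μ :=
    ⟨μ[G|m], stronglyMeasurable_condExp, hFl.trans hFG⟩
  have key : (inner ℝ ((condExpL2 V ℝ hm Gl : Lp V 2 μ)) Fl : ℝ) = inner ℝ Gl Fl :=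
    inner_condExpL2_eq_inner_fun hm Gl Fl hFm
  rw [L2.inner_def, L2.inner_def] at key
  have hce : (condExpL2 V ℝ hm Gl : Ω → V) =ᵐ[μ] F := by
    refine (condExpL2_ae_eq_condexp' hm Gl).trans ?_
    exact (condExp_congr_ae hGl).trans hFG.symm
  have hL : ∫ ω, (inner ℝ (((condExpL2 V ℝ hm Gl : Lp V 2 μ) : Ω → V) ω) ((Fl : Ω → V) ω) : ℝ) ∂μ
      = ∫ ω, ‖F ω‖ ^ 2 ∂μ := by
    refine integral_congr_ae ?_
    filter_upwards [hce, hFl] with ω h1 h2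
    rw [h1, h2, real_inner_self_eq_norm_sq]
  have hR : ∫ ω, (inner ℝ ((Gl : Ω → V) ω) ((Fl : Ω → V) ω) : ℝ) ∂μ
      = ∫ ω, (inner ℝ (F ω) (G ω) : ℝ) ∂μ := by
    refine integral_congr_ae ?_
    filter_upwards [hGl, hFl] with ω h1 h2
    rw [h1, h2, real_inner_comm]
  rw [← hR, ← key, hL]


lemma integrable_inner_of_memLp_two {Ω V : Type*} [NormedAddCommGroup V]
    [InnerProductSpace ℝ V] [SecondCountableTopology V] {m0 : MeasurableSpace Ω}
    {μ : @MeasureTheory.Measure Ω m0} {F G : Ω → V}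
    (hF2 : MemLp F 2 μ) (hG2 : MemLp G 2 μ) :
    Integrable (fun ω => (inner ℝ (F ω) (G ω) : ℝ)) μ := by
  have hsm : AEStronglyMeasurable (fun ω => (inner ℝ (F ω) (G ω) : ℝ)) μ :=
    hF2.aestronglyMeasurable.inner hG2.aestronglyMeasurable
  have hFi : Integrable (fun ω => ‖F ω‖ ^ 2) μ :=
    (memLp_two_iff_integrable_sq_norm hF2.aestronglyMeasurable).mp hF2
  have hGi : Integrable (fun ω => ‖G ω‖ ^ 2) μ :=
    (memLp_two_iff_integrable_sq_norm hG2.aestronglyMeasurable).mp hG2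
  refine Integrable.mono' ((hFi.add hGi).const_mul (1/2)) hsm ?_
  filter_upwards with ω
  have h1 : |(inner ℝ (F ω) (G ω) : ℝ)| ≤ ‖F ω‖ * ‖G ω‖ := abs_real_inner_le_norm _ _
  have h2 : ‖F ω‖ * ‖G ω‖ ≤ 1/2 * (‖F ω‖^2 + ‖G ω‖^2) := by
    nlinarith [sq_nonneg (‖F ω‖ - ‖G ω‖)]
  simpa [Real.norm_eq_abs] using h1.trans h2

/-- **Task-branch descent with interface drift.**
Let `U, V` be separable real Hilbert spaces and `T : U × V → ℝ` bounded below by `T_inf`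
and, for each fixed `u`, differentiable in `v` with `L₂`-Lipschitz partial gradient
(uniformly in `u`).  Let `u₀, v₀` be deterministic and `(u_t), (v_t), (ĝ_t)` processes
with `v_{t+1} = v_t − η₂ ĝ_t`, `0 < η₂ ≤ 1/L₂`, where for each `t < N` there is a
sub-σ-algebra `𝓖_t` making `u_{t+1}` and `v_t` strongly measurable, with unbiased
stochastic gradients of conditional variance at most `σ₂²`, and the listed integrability
conditions.  With `Γ_N := Σ_{t<N} E[|T(u_{t+1}, v_t) − T(u_t, v_t)|]`, for `N ≥ 1`:
`(1/N) Σ_{t<N} E[‖∇_v T(u_{t+1}, v_t)‖²] ≤ 2 (T(u₀,v₀) − T_inf + Γ_N)/(η₂ N) + L₂ η₂ σ₂²`. -/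
theorem lopt_task_descent_interface_drift
    {U V : Type*}
    [NormedAddCommGroup U] [InnerProductSpace ℝ U]
    [CompleteSpace U] [SecondCountableTopology U]
    [NormedAddCommGroup V] [InnerProductSpace ℝ V]
    [CompleteSpace V] [SecondCountableTopology V]
    {Ω : Type*} {m0 : MeasurableSpace Ω}
    (μ : @MeasureTheory.Measure Ω m0) [IsProbabilityMeasure μ]
    (T : U → V → ℝ) (L₂ Tinf : ℝ) (hL₂ : 0 < L₂)
    (hdiff : ∀ u : U, Differentiable ℝ (T u))
    (hlip : ∀ (u : U) (v v' : V),
      ‖gradient (T u) v - gradient (T u) v'‖ ≤ L₂ * ‖v - v'‖)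
    (hbdd : ∀ (u : U) (v : V), Tinf ≤ T u v)
    (u₀ : U) (v₀ : V) (N : ℕ) (hN : 1 ≤ N)
    (u : ℕ → Ω → U) (v : ℕ → Ω → V) (ghat : ℕ → Ω → V)
    (hu0 : ∀ ω, u 0 ω = u₀) (hv0 : ∀ ω, v 0 ω = v₀)
    (η₂ σ₂ : ℝ) (hη₂ : 0 < η₂) (hstep : η₂ ≤ 1 / L₂)
    (hupd : ∀ t < N, ∀ ω, v (t + 1) ω = v t ω - η₂ • ghat t ω)
    (𝒢 : ℕ → MeasurableSpace Ω) (h𝒢 : ∀ t < N, 𝒢 t ≤ m0)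
    (hmeasu : ∀ t < N, StronglyMeasurable[𝒢 t] (u (t + 1)))
    (hmeasv : ∀ t < N, StronglyMeasurable[𝒢 t] (v t))
    (hintg : ∀ t < N, Integrable (ghat t) μ)
    (hunbiased : ∀ t < N,
      μ[ghat t | 𝒢 t] =ᵐ[μ] fun ω => gradient (T (u (t + 1) ω)) (v t ω))
    (hvar : ∀ t < N, ∀ᵐ ω ∂μ,
      (μ[(fun ω' => ‖ghat t ω' - gradient (T (u (t + 1) ω')) (v t ω')‖ ^ 2) | 𝒢 t]) ω
        ≤ σ₂ ^ 2)
    (hint1 : ∀ t ≤ N, Integrable (fun ω => T (u t ω) (v t ω)) μ)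
    (hint2 : ∀ t < N, Integrable (fun ω => T (u (t + 1) ω) (v t ω)) μ)
    (hint3 : ∀ t < N,
      Integrable (fun ω => ‖gradient (T (u (t + 1) ω)) (v t ω)‖ ^ 2) μ)
    (hint4 : ∀ t < N, Integrable (fun ω => ‖ghat t ω‖ ^ 2) μ) :
    (1 / (N : ℝ)) *
        ∑ t ∈ Finset.range N, ∫ ω, ‖gradient (T (u (t + 1) ω)) (v t ω)‖ ^ 2 ∂μ ≤
      2 * (T u₀ v₀ - Tinf
            + ∑ t ∈ Finset.range N,
                ∫ ω, |T (u (t + 1) ω) (v t ω) - T (u t ω) (v t ω)| ∂μ) / (η₂ * N)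
        + L₂ * η₂ * σ₂ ^ 2 := by
    classical
  have hNpos : (0:ℝ) < (N:ℝ) := by exact_mod_cast hN
  have hLη : L₂ * η₂ ≤ 1 := by
    rw [mul_comm]
    exact (le_div_iff₀ hL₂).mp hstep
  set F : ℕ → Ω → V := fun t ω => gradient (T (u (t + 1) ω)) (v t ω) with hFdef
  set A : ℕ → ℝ := fun t => ∫ ω, ‖F t ω‖ ^ 2 ∂μ with hAdef
  set I : ℕ → ℝ := fun t => ∫ ω, T (u t ω) (v t ω) ∂μ with hIdef
  set D : ℕ → ℝ := fun t => ∫ ω, |T (u (t + 1) ω) (v t ω) - T (u t ω) (v t ω)| ∂μ with hDdef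
  have key : ∀ t, t < N → η₂ / 2 * A t ≤ I t - I (t + 1) + D t + L₂ * η₂ ^ 2 / 2 * σ₂ ^ 2 := by
    intro t ht
    have ht1 : t + 1 ≤ N := ht
    have hm := h𝒢 t ht
    have hGsm := (hintg t ht).aestronglyMeasurable
    have hG2 : MemLp (ghat t) 2 μ :=
      (memLp_two_iff_integrable_sq_norm hGsm).mpr (hint4 t ht)
    have hFG : F t =ᵐ[μ] μ[ghat t | 𝒢 t] := (hunbiased t ht).symm
    have hFsm : AEStronglyMeasurable (F t) μ :=
      ((stronglyMeasurable_condExp.mono hm).aestronglyMeasurable).congr (hunbiased t ht)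
    have hF2 : MemLp (F t) 2 μ :=
      (memLp_two_iff_integrable_sq_norm hFsm).mpr (hint3 t ht)
    have hinner : ∫ ω, (inner ℝ (F t ω) (ghat t ω) : ℝ) ∂μ = A t :=
      integral_inner_condexp_eq hm hF2 hG2 hFG
    have hinnerInt : Integrable (fun ω => (inner ℝ (F t ω) (ghat t ω) : ℝ)) μ :=
      integrable_inner_of_memLp_two hF2 hG2
    have hGF2 : MemLp (fun ω => ghat t ω - F t ω) 2 μ := hG2.sub hF2
    have hbInt : Integrable (fun ω => ‖ghat t ω - F t ω‖ ^ 2) μ :=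
      (memLp_two_iff_integrable_sq_norm hGF2.aestronglyMeasurable).mp hGF2
    have hb : ∫ ω, ‖ghat t ω - F t ω‖ ^ 2 ∂μ ≤ σ₂ ^ 2 := by
      have h1 : ∫ ω, ‖ghat t ω - F t ω‖ ^ 2 ∂μ
          = ∫ ω, (μ[(fun ω' => ‖ghat t ω' - gradient (T (u (t + 1) ω')) (v t ω')‖ ^ 2) | 𝒢 t]) ω ∂μ :=
        (integral_condExp hm).symm
      rw [h1]
      calc ∫ ω, (μ[(fun ω' => ‖ghat t ω' - gradient (T (u (t + 1) ω')) (v t ω')‖ ^ 2) | 𝒢 t]) ω ∂μ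
          ≤ ∫ _ω, σ₂ ^ 2 ∂μ :=
            integral_mono_ae integrable_condExp (integrable_const _) (hvar t ht)
        _ = σ₂ ^ 2 := by simp
    have hGnorm : ∫ ω, ‖ghat t ω‖ ^ 2 ∂μ
        = (∫ ω, ‖ghat t ω - F t ω‖ ^ 2 ∂μ)
          + 2 * (∫ ω, (inner ℝ (F t ω) (ghat t ω) : ℝ) ∂μ) - A t := by
      have hpt : (fun ω => ‖ghat t ω‖ ^ 2)
          = fun ω => ‖ghat t ω - F t ω‖ ^ 2 + 2 * (inner ℝ (F t ω) (ghat t ω) : ℝ) - ‖F t ω‖ ^ 2 := by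
        funext ω
        have h0 := norm_sub_sq_real (ghat t ω) (F t ω)
        have h2 : (inner ℝ (ghat t ω) (F t ω) : ℝ) = inner ℝ (F t ω) (ghat t ω) :=
          real_inner_comm _ _
        rw [h2] at h0
        linarith
      have hci : Integrable (fun ω => 2 * (inner ℝ (F t ω) (ghat t ω) : ℝ)) μ :=
        hinnerInt.const_mul 2
      have hbi2 : Integrable
          (fun ω => ‖ghat t ω - F t ω‖ ^ 2 + 2 * (inner ℝ (F t ω) (ghat t ω) : ℝ)) μ :=
        hbInt.add hci
      rw [hpt, integral_sub hbi2 (hint3 t ht), integral_add hbInt hci, integral_const_mul]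
    have hdesc : I (t + 1)
        ≤ (∫ ω, T (u (t + 1) ω) (v t ω) ∂μ)
          - η₂ * (∫ ω, (inner ℝ (F t ω) (ghat t ω) : ℝ) ∂μ)
          + L₂ / 2 * η₂ ^ 2 * (∫ ω, ‖ghat t ω‖ ^ 2 ∂μ) := by
      have hle : ∀ ω, T (u (t + 1) ω) (v (t + 1) ω)
          ≤ T (u (t + 1) ω) (v t ω) + (-η₂) * (inner ℝ (F t ω) (ghat t ω) : ℝ)
            + L₂ / 2 * η₂ ^ 2 * ‖ghat t ω‖ ^ 2 := by
        intro ω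
        have hdl := descent_lemma (T (u (t + 1) ω)) L₂ hL₂.le (hdiff _)
          (hlip (u (t + 1) ω)) (v t ω) (-(η₂ • ghat t ω))
        have hv' : v (t + 1) ω = v t ω + -(η₂ • ghat t ω) := by
          rw [hupd t ht ω, sub_eq_add_neg]
        have hin : (inner ℝ (gradient (T (u (t + 1) ω)) (v t ω)) (-(η₂ • ghat t ω)) : ℝ)
            = (-η₂) * (inner ℝ (F t ω) (ghat t ω) : ℝ) := by
          simp only [inner_neg_right, real_inner_smul_right, hFdef]
          ring
        have hnorm : ‖-(η₂ • ghat t ω)‖ ^ 2 = η₂ ^ 2 * ‖ghat t ω‖ ^ 2 := by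
          rw [norm_neg, norm_smul, mul_pow, Real.norm_eq_abs, sq_abs]
        rw [hv']
        refine hdl.trans (le_of_eq ?_)
        rw [hin, hnorm]
        ring
      have hi0 : Integrable (fun ω => (-η₂) * (inner ℝ (F t ω) (ghat t ω) : ℝ)) μ :=
        hinnerInt.const_mul (-η₂)
      have hi1 : Integrable (fun ω => T (u (t + 1) ω) (v t ω)
          + (-η₂) * (inner ℝ (F t ω) (ghat t ω) : ℝ)) μ := (hint2 t ht).add hi0
      have hi2 : Integrable (fun ω => L₂ / 2 * η₂ ^ 2 * ‖ghat t ω‖ ^ 2) μ :=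
        (hint4 t ht).const_mul _
      have hint' : Integrable (fun ω => T (u (t + 1) ω) (v t ω)
          + (-η₂) * (inner ℝ (F t ω) (ghat t ω) : ℝ)
          + L₂ / 2 * η₂ ^ 2 * ‖ghat t ω‖ ^ 2) μ := hi1.add hi2
      have h1 : I (t + 1) ≤ ∫ ω, (T (u (t + 1) ω) (v t ω)
          + (-η₂) * (inner ℝ (F t ω) (ghat t ω) : ℝ)
          + L₂ / 2 * η₂ ^ 2 * ‖ghat t ω‖ ^ 2) ∂μ :=
        integral_mono (hint1 (t + 1) ht1) hint' hle
      rw [integral_add hi1 hi2, integral_add (hint2 t ht) hi0,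
        integral_const_mul, integral_const_mul] at h1
      linarith
    have hJI : (∫ ω, T (u (t + 1) ω) (v t ω) ∂μ) - I t ≤ D t := by
      have he : (∫ ω, T (u (t + 1) ω) (v t ω) ∂μ) - I t
          = ∫ ω, (T (u (t + 1) ω) (v t ω) - T (u t ω) (v t ω)) ∂μ :=
        (integral_sub (hint2 t ht) (hint1 t ht.le)).symm
      rw [he]
      exact integral_mono ((hint2 t ht).sub (hint1 t ht.le))
        ((hint2 t ht).sub (hint1 t ht.le)).abs (fun ω => le_abs_self _)
    have hApos : 0 ≤ A t := integral_nonneg fun ω => sq_nonneg _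
    rw [hinner, hGnorm, hinner] at hdesc
    set b := ∫ ω, ‖ghat t ω - F t ω‖ ^ 2 ∂μ
    nlinarith [mul_nonneg (mul_nonneg hL₂.le (sq_nonneg η₂)) (sub_nonneg.mpr hb),
      mul_nonneg (mul_nonneg hη₂.le hApos) (sub_nonneg.mpr hLη)]
  -- sum the per-step inequalities
  have hsum : η₂ / 2 * ∑ t ∈ Finset.range N, A t
      ≤ (I 0 - I N) + (∑ t ∈ Finset.range N, D t) + (N : ℝ) * (L₂ * η₂ ^ 2 / 2 * σ₂ ^ 2) := by
    have h1 : ∑ t ∈ Finset.range N, (η₂ / 2 * A t)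
        ≤ ∑ t ∈ Finset.range N, (I t - I (t + 1) + D t + L₂ * η₂ ^ 2 / 2 * σ₂ ^ 2) :=
      Finset.sum_le_sum fun t ht => key t (Finset.mem_range.mp ht)
    rw [← Finset.mul_sum] at h1
    have h2 : ∑ t ∈ Finset.range N, (I t - I (t + 1) + D t + L₂ * η₂ ^ 2 / 2 * σ₂ ^ 2)
        = (I 0 - I N) + (∑ t ∈ Finset.range N, D t)
          + (N : ℝ) * (L₂ * η₂ ^ 2 / 2 * σ₂ ^ 2) := by
      rw [Finset.sum_add_distrib, Finset.sum_add_distrib, Finset.sum_range_sub' I N,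
        Finset.sum_const, Finset.card_range, nsmul_eq_mul]
    linarith
  have hI0 : I 0 = T u₀ v₀ := by
    have : (fun ω => T (u 0 ω) (v 0 ω)) = fun _ω => T u₀ v₀ := by
      funext ω; rw [hu0 ω, hv0 ω]
    rw [hIdef]
    simp only [this]
    simp
  have hIN : Tinf ≤ I N := by
    have h1 : ∫ _ω, Tinf ∂μ ≤ ∫ ω, T (u N ω) (v N ω) ∂μ :=
      integral_mono (integrable_const _) (hint1 N le_rfl) fun ω => hbdd _ _
    simpa using h1
  -- final arithmetic
  set S := ∑ t ∈ Finset.range N, A t with hSdef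
  set Γ := ∑ t ∈ Finset.range N, D t with hΓdef
  have hkey : η₂ / 2 * S ≤ (T u₀ v₀ - Tinf + Γ) + (N : ℝ) * (L₂ * η₂ ^ 2 / 2 * σ₂ ^ 2) := by
    rw [← hI0]
    linarith
  have hη₂N : (0:ℝ) < η₂ * (N : ℝ) := by positivity
  have hfin : (1 / (N : ℝ)) * S
      ≤ 2 * (T u₀ v₀ - Tinf + Γ) / (η₂ * N) + L₂ * η₂ * σ₂ ^ 2 := by
    rw [← sub_nonneg]
    have expand : 2 * (T u₀ v₀ - Tinf + Γ) / (η₂ * (N : ℝ)) + L₂ * η₂ * σ₂ ^ 2 - 1 / (N : ℝ) * S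
        = (2 / (η₂ * (N : ℝ)))
          * ((T u₀ v₀ - Tinf + Γ) + (N : ℝ) * (L₂ * η₂ ^ 2 / 2 * σ₂ ^ 2) - η₂ / 2 * S) := by
      field_simp
    rw [expand]
    exact mul_nonneg (by positivity) (by linarith [hkey])
  exact hfin
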